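/- Consider DANE+ with control variate h_{i,r} = ∇f_i(x^r) − ∇f(x^r), global update x^{r+1} = x_{i_r,r+1} for an arbitrary index sequence, f_i continuously differentiable with δ_B-BHD, and local solutions satisfying F_{i,r}(x_{i,r+1}) ≤ F_{i,r}(x^r) and ‖∇F_{i,r}(x_{i,r+1})‖ ≤ e_{r+1}. With λ = aδ_B for a > 1, after R rounds: min over 0 ≤ r ≤ R of ‖∇f(x^r)‖² ≤ (4(a+1)²/(a−1)) · δ_B(f(x^0) − f⋆)/R + (2/R) Σ_{r=1}^R e_r², where f⋆ := inf f. -/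

import Mathlib

open InnerProductSpace

variable {E : Type*} [NormedAddCommGroup E] [InnerProductSpace ℝ E] [CompleteSpace E]

lemma hga_add {f g : E → ℝ} {a b x : E} (hf : HasGradientAt f a x)
    (hg : HasGradientAt g b x) : HasGradientAt (fun z => f z + g z) (a + b) x := by
  rw [hasGradientAt_iff_hasFDerivAt] at *
  rw [map_add]; exact hf.fun_add hg

lemma hga_sub {f g : E → ℝ} {a b x : E} (hf : HasGradientAt f a x)
    (hg : HasGradientAt g b x) : HasGradientAt (fun z => f z - g z) (a - b) x := by
  rw [hasGradientAt_iff_hasFDerivAt] at *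
  rw [map_sub]; exact hf.fun_sub hg

lemma hga_smul {f : E → ℝ} {a x : E} (c : ℝ) (hf : HasGradientAt f a x) :
    HasGradientAt (fun z => c * f z) (c • a) x := by
  rw [hasGradientAt_iff_hasFDerivAt] at *
  simpa [map_smul] using hf.const_mul c

lemma hga_inner (h : E) (z : E) : HasGradientAt (fun w => (inner ℝ w h : ℝ)) h z := by
  rw [hasGradientAt_iff_hasFDerivAt]
  have : (toDual ℝ E h : E →L[ℝ] ℝ) = innerSL ℝ h := by
    ext w; simp [toDual_apply_apply]
  rw [this]
  have heq : (fun w : E => (inner ℝ w h : ℝ)) = fun w => innerSL ℝ h w := by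
    funext w; simp [real_inner_comm]
  rw [heq]
  exact (innerSL ℝ h).hasFDerivAt

lemma hga_normsq (c z : E) : HasGradientAt (fun w => ‖w - c‖ ^ 2) ((2:ℝ) • (z - c)) z := by
  rw [hasGradientAt_iff_hasFDerivAt]
  have h1 : HasFDerivAt (fun w : E => w - c) (ContinuousLinearMap.id ℝ E) z :=
    (hasFDerivAt_id z).sub_const c
  have h2 := h1.inner ℝ h1
  have heq : (fun w : E => ‖w - c‖ ^ 2) = fun w : E => (inner ℝ (w - c) (w - c) : ℝ) := by
    funext w; rw [real_inner_self_eq_norm_sq]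
  rw [heq]
  convert h2 using 1
  ext w
  simp [toDual_apply_apply, fderivInnerCLM_apply, real_inner_smul_left, inner_sub_left,
    inner_sub_right, real_inner_comm, two_smul]
  ext w
  simp [toDual_apply_apply, fderivInnerCLM_apply, real_inner_smul_left, inner_sub_left,
    inner_sub_right, real_inner_comm, two_smul]
lemma descent_lemma {φ : E → ℝ} {G : E → E} (hφ : ∀ z, HasGradientAt φ (G z) z)
    {L : ℝ} (hL : 0 ≤ L) (hlip : ∀ z w, ‖G z - G w‖ ≤ L * ‖z - w‖) (x y : E) :
    φ y ≤ φ x + (inner ℝ (G x) (y - x) : ℝ) + L / 2 * ‖y - x‖ ^ 2 := by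
  set d := y - x with hd
  set g : ℝ → ℝ := fun t => φ (x + t • d) with hgdef
  have hg : ∀ t : ℝ, HasDerivAt g (inner ℝ (G (x + t • d)) d : ℝ) t := by
    intro t
    have hc : HasDerivAt (fun t : ℝ => x + t • d) d t := by
      simpa using ((hasDerivAt_id t).smul_const d).const_add x
    have := ((hφ (x + t • d)).hasFDerivAt).comp_hasDerivAt t hc
    simp only [toDual_apply_apply] at this; exact this
  set ψ : ℝ → ℝ := fun t => φ x + t * (inner ℝ (G x) d : ℝ) + L / 2 * ‖d‖ ^ 2 * t ^ 2 - g t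
    with hψdef
  have hψ : ∀ t : ℝ, HasDerivAt ψ
      ((inner ℝ (G x) d : ℝ) + L / 2 * ‖d‖ ^ 2 * (2 * t) - (inner ℝ (G (x + t • d)) d : ℝ)) t := by
    intro t
    have h1 : HasDerivAt (fun t : ℝ => φ x + t * (inner ℝ (G x) d : ℝ)
        + L / 2 * ‖d‖ ^ 2 * t ^ 2)
        ((inner ℝ (G x) d : ℝ) + L / 2 * ‖d‖ ^ 2 * (2 * t)) t := by
      have ha : HasDerivAt (fun t : ℝ => t * (inner ℝ (G x) d : ℝ)) (inner ℝ (G x) d : ℝ) t := by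
        simpa using (hasDerivAt_id t).mul_const (inner ℝ (G x) d : ℝ)
      have hb : HasDerivAt (fun t : ℝ => L / 2 * ‖d‖ ^ 2 * t ^ 2)
          (L / 2 * ‖d‖ ^ 2 * (2 * t)) t := by
        have := (hasDerivAt_pow 2 t).const_mul (L / 2 * ‖d‖ ^ 2)
        simpa [mul_comm, mul_assoc] using this
      exact (ha.const_add (φ x)).add hb
    exact h1.sub (hg t)
  have hmono : MonotoneOn ψ (Set.Icc (0:ℝ) 1) := by
    apply monotoneOn_of_deriv_nonneg (convex_Icc 0 1)
    · exact fun t _ => ((hψ t).differentiableAt).continuousAt.continuousWithinAt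
    · exact fun t _ => ((hψ t).differentiableAt).differentiableWithinAt
    · intro t ht
      rw [interior_Icc] at ht
      rw [(hψ t).deriv]
      have hnorm : ‖(x + t • d) - x‖ = t * ‖d‖ := by
        simp [norm_smul, abs_of_nonneg ht.1.le]
      have hkey : (inner ℝ (G (x + t • d)) d : ℝ) - (inner ℝ (G x) d : ℝ) ≤ L * t * ‖d‖ ^ 2 := by
        have h1 : (inner ℝ (G (x + t • d)) d : ℝ) - (inner ℝ (G x) d : ℝ)
            = (inner ℝ (G (x + t • d) - G x) d : ℝ) := by rw [inner_sub_left]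
        rw [h1]
        calc (inner ℝ (G (x + t • d) - G x) d : ℝ) ≤ ‖G (x + t • d) - G x‖ * ‖d‖ :=
              real_inner_le_norm _ _
          _ ≤ (L * ‖(x + t • d) - x‖) * ‖d‖ := by
              have := hlip (x + t • d) x
              exact mul_le_mul_of_nonneg_right this (norm_nonneg d)
          _ = L * t * ‖d‖ ^ 2 := by rw [hnorm]; ring
      nlinarith
  have h01 : ψ 0 ≤ ψ 1 := hmono (Set.left_mem_Icc.mpr zero_le_one)
    (Set.right_mem_Icc.mpr zero_le_one) zero_le_one
  have hψ0 : ψ 0 = 0 := by simp [hψdef, hgdef]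
  have hψ1 : ψ 1 = φ x + (inner ℝ (G x) d : ℝ) + L / 2 * ‖d‖ ^ 2 - φ y := by
    simp [hψdef, hgdef, hd]
  rw [hψ0, hψ1] at h01
  linarith

lemma sum_Icc_one_eq (g : ℕ → ℝ) (R : ℕ) :
    ∑ r ∈ Finset.Icc 1 R, g r = ∑ s ∈ Finset.range R, g (s + 1) := by
  induction R with
  | zero => simp
  | succ R ih =>
      rw [Finset.sum_Icc_succ_top (by omega), ih, Finset.sum_range_succ]

theorem stmt_9 {d n : ℕ} (hn : 0 < n) (f : Fin n → EuclideanSpace ℝ (Fin d) → ℝ)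
    (hf : ∀ i, ContDiff ℝ 1 (f i)) (δB a lam : ℝ) (hδ : 0 ≤ δB) (ha : 1 < a)
    (hlam : lam = a * δB)
    (fbar : EuclideanSpace ℝ (Fin d) → ℝ)
    (hfbar : fbar = fun x => (1 / (n : ℝ)) * ∑ i, f i x)
    (hBHD : ∀ i, ∀ x y,
      ‖(gradient (f i) x - gradient fbar x) - (gradient (f i) y - gradient fbar y)‖
        ≤ δB * ‖x - y‖)
    (x : ℕ → EuclideanSpace ℝ (Fin d))
    (xl : Fin n → ℕ → EuclideanSpace ℝ (Fin d))
    (idx : ℕ → Fin n)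
    (hupd : ∀ r : ℕ, x (r + 1) = xl (idx r) (r + 1))
    (F : Fin n → ℕ → EuclideanSpace ℝ (Fin d) → ℝ)
    (hFdef : ∀ i r, F i r = fun z => f i z
        - (inner ℝ z (gradient (f i) (x r) - gradient fbar (x r)) : ℝ)
        + lam / 2 * ‖z - x r‖ ^ 2)
    (e : ℕ → ℝ) (he : ∀ r, 0 ≤ e r)
    (hdec : ∀ i r, F i r (xl i (r + 1)) ≤ F i r (x r))
    (hgrad : ∀ i r, ‖gradient (F i r) (xl i (r + 1))‖ ≤ e (r + 1))
    (hbdd : BddBelow (Set.range fbar))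
    (fstar : ℝ) (hfstar : fstar = ⨅ y, fbar y)
    (R : ℕ) (hR : 1 ≤ R) :
    ∃ r ≤ R, ‖gradient fbar (x r)‖ ^ 2
      ≤ 4 * (a + 1) ^ 2 / (a - 1) * (δB * (fbar (x 0) - fstar)) / R
        + 2 / R * ∑ r ∈ Finset.Icc 1 R, e r ^ 2 := by
  
  have ha1 : (0:ℝ) < a - 1 := by linarith
  have hlam0 : 0 ≤ lam := by rw [hlam]; positivity
  have hdfi : ∀ i, Differentiable ℝ (f i) := fun i => (hf i).differentiable one_ne_zero
  have hdfbar : Differentiable ℝ fbar := by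
    rw [hfbar]
    exact (Differentiable.fun_sum fun i _ => hdfi i).const_mul _
  -- per-round key facts
  have key : ∀ r : ℕ,
      fbar (x (r + 1)) + (lam - δB) / 2 * ‖x (r + 1) - x r‖ ^ 2 ≤ fbar (x r) ∧
      ‖gradient fbar (x (r + 1))‖ ≤ e (r + 1) + (lam + δB) * ‖x (r + 1) - x r‖ := by
    intro r
    set i := idx r with hi
    set p := x r with hp
    set y := xl i (r + 1) with hy
    have hxy : x (r + 1) = y := hupd r
    set h : EuclideanSpace ℝ (Fin d) := gradient (f i) p - gradient fbar p with hh
    -- gradient of F i r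
    have hFg : ∀ z, HasGradientAt (F i r)
        (gradient (f i) z - h + lam • (z - p)) z := by
      intro z
      rw [hFdef]
      have g1 : HasGradientAt (f i) (gradient (f i) z) z := (hdfi i z).hasGradientAt
      have g2 := hga_inner h z
      have g3 := hga_smul (lam / 2) (hga_normsq p z)
      have g4 := hga_add (hga_sub g1 g2) g3
      have : (lam / 2) • ((2:ℝ) • (z - p)) = lam • (z - p) := by
        rw [smul_smul]; congr 1; ring
      rw [this] at g4
      exact g4
    have hFgrad : gradient (F i r) y = gradient (f i) y - h + lam • (y - p) :=
      (hFg y).gradient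
    -- gradient bound
    have hgb : ‖gradient fbar y‖ ≤ e (r + 1) + (lam + δB) * ‖y - p‖ := by
      have hexp : gradient fbar y = gradient (F i r) y
          - ((gradient (f i) y - gradient fbar y) - (gradient (f i) p - gradient fbar p))
          - lam • (y - p) := by
        rw [hFgrad, hh]; abel
      have hB := hBHD i y p
      have hg1 := hgrad i r
      calc ‖gradient fbar y‖
          ≤ ‖gradient (F i r) y
              - ((gradient (f i) y - gradient fbar y) - (gradient (f i) p - gradient fbar p))‖
            + ‖lam • (y - p)‖ := by
              have hne : ‖gradient fbar y‖ = ‖gradient (F i r) y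
                  - ((gradient (f i) y - gradient fbar y) - (gradient (f i) p - gradient fbar p))
                  - lam • (y - p)‖ := congrArg (fun v : EuclideanSpace ℝ (Fin d) => ‖v‖) hexp
              rw [hne]; exact norm_sub_le _ _
        _ ≤ ‖gradient (F i r) y‖
            + ‖(gradient (f i) y - gradient fbar y) - (gradient (f i) p - gradient fbar p)‖
            + ‖lam • (y - p)‖ := by
              have := norm_sub_le (gradient (F i r) y)
                ((gradient (f i) y - gradient fbar y) - (gradient (f i) p - gradient fbar p))
              linarith
        _ ≤ e (r + 1) + δB * ‖y - p‖ + lam * ‖y - p‖ := by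
              have hs : ‖lam • (y - p)‖ = lam * ‖y - p‖ := by
                rw [norm_smul, Real.norm_eq_abs, abs_of_nonneg hlam0]
              rw [hs]
              linarith [hg1, hB]
        _ = e (r + 1) + (lam + δB) * ‖y - p‖ := by ring
    -- descent
    have hdesc : fbar y + (lam - δB) / 2 * ‖y - p‖ ^ 2 ≤ fbar p := by
      set φ : EuclideanSpace ℝ (Fin d) → ℝ :=
        fun z => fbar z - f i z + (inner ℝ z h : ℝ) with hφdef
      set G : EuclideanSpace ℝ (Fin d) → EuclideanSpace ℝ (Fin d) :=
        fun z => gradient fbar z - gradient (f i) z + h with hGdef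
      have hG : ∀ z, HasGradientAt φ (G z) z := fun z =>
        hga_add (hga_sub (hdfbar z).hasGradientAt (hdfi i z).hasGradientAt) (hga_inner h z)
      have hlip : ∀ z w, ‖G z - G w‖ ≤ δB * ‖z - w‖ := by
        intro z w
        have : G z - G w = -((gradient (f i) z - gradient fbar z)
            - (gradient (f i) w - gradient fbar w)) := by
          simp only [hGdef]; abel
        rw [this, norm_neg]
        exact hBHD i z w
      have hd := descent_lemma hG hδ hlip p y
      have hGp : G p = 0 := by simp only [hGdef, hh]; abel
      rw [hGp] at hd
      simp only [inner_zero_left, add_zero] at hd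
      have hdec' := hdec i r
      rw [hFdef] at hdec'
      simp only [sub_self, norm_zero] at hdec'
      -- hdec' : f i y - ⟪y,h⟫ + lam/2*‖y-p‖^2 ≤ f i p - ⟪p,h⟫ + lam/2*0^2
      simp only [hφdef] at hd
      have h0 : (0:ℝ) ^ 2 = 0 := by norm_num
      rw [h0, mul_zero, add_zero] at hdec'
      linarith
    rw [hxy]
    exact ⟨hdesc, hgb⟩
  -- telescoping
  set c : ℝ := (lam - δB) / 2 with hc
  have hc0 : 0 ≤ c := by rw [hc, hlam]; nlinarith
  have tele : ∀ m : ℕ,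
      fbar (x m) + c * ∑ r ∈ Finset.range m, ‖x (r + 1) - x r‖ ^ 2 ≤ fbar (x 0) := by
    intro m
    induction m with
    | zero => simp
    | succ m ih =>
        have := (key m).1
        rw [Finset.sum_range_succ]
        linarith
  have hfs : fstar ≤ fbar (x R) := by
    rw [hfstar]
    exact ciInf_le hbdd (x R)
  set σ : ℝ := ∑ r ∈ Finset.range R, ‖x (r + 1) - x r‖ ^ 2 with hσdef
  have hσ0 : 0 ≤ σ := Finset.sum_nonneg fun r _ => sq_nonneg _
  have hσ : c * σ ≤ fbar (x 0) - fstar := by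
    have := tele R
    linarith
  -- sum of gradient norms
  have hptwise : ∀ s : ℕ, ‖gradient fbar (x (s + 1))‖ ^ 2
      ≤ 2 * e (s + 1) ^ 2 + 2 * (lam + δB) ^ 2 * ‖x (s + 1) - x s‖ ^ 2 := by
    intro s
    have h1 := (key s).2
    have h2 : 0 ≤ ‖gradient fbar (x (s + 1))‖ := norm_nonneg _
    nlinarith [sq_nonneg (e (s + 1) - (lam + δB) * ‖x (s + 1) - x s‖)]
  have hsum : ∑ r ∈ Finset.Icc 1 R, ‖gradient fbar (x r)‖ ^ 2
      ≤ 2 * ∑ r ∈ Finset.Icc 1 R, e r ^ 2 + 2 * (lam + δB) ^ 2 * σ := by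
    rw [sum_Icc_one_eq (fun r => ‖gradient fbar (x r)‖ ^ 2) R,
      sum_Icc_one_eq (fun r => e r ^ 2) R, hσdef, Finset.mul_sum, Finset.mul_sum,
      ← Finset.sum_add_distrib]
    exact Finset.sum_le_sum fun s _ => hptwise s
  -- final bound
  have hRpos : (0:ℝ) < R := by exact_mod_cast hR
  set B : ℝ := 4 * (a + 1) ^ 2 / (a - 1) * (δB * (fbar (x 0) - fstar)) / R
        + 2 / R * ∑ r ∈ Finset.Icc 1 R, e r ^ 2 with hBdef
  have hquad : 2 * (lam + δB) ^ 2 * σ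
      ≤ 4 * (a + 1) ^ 2 / (a - 1) * (δB * (fbar (x 0) - fstar)) := by
    have hk : (0:ℝ) ≤ 4 * (a + 1) ^ 2 * δB / (a - 1) := by positivity
    have h1 : (4 * (a + 1) ^ 2 * δB / (a - 1)) * (c * σ)
        ≤ (4 * (a + 1) ^ 2 * δB / (a - 1)) * (fbar (x 0) - fstar) :=
      mul_le_mul_of_nonneg_left hσ hk
    have h2 : (4 * (a + 1) ^ 2 * δB / (a - 1)) * (c * σ) = 2 * (lam + δB) ^ 2 * σ := by
      rw [hc, hlam]
      field_simp
      ring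
    have h3 : (4 * (a + 1) ^ 2 * δB / (a - 1)) * (fbar (x 0) - fstar)
        = 4 * (a + 1) ^ 2 / (a - 1) * (δB * (fbar (x 0) - fstar)) := by
      field_simp
    linarith [h1, h2 ▸ h1]
  have htotal : ∑ r ∈ Finset.Icc 1 R, ‖gradient fbar (x r)‖ ^ 2
      ≤ ∑ _r ∈ Finset.Icc 1 R, B := by
    rw [Finset.sum_const, Nat.card_Icc]
    have hcard : (R + 1 - 1 : ℕ) = R := by omega
    rw [hcard, nsmul_eq_mul]
    have hRB : (R:ℝ) * B = 4 * (a + 1) ^ 2 / (a - 1) * (δB * (fbar (x 0) - fstar))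
        + 2 * ∑ r ∈ Finset.Icc 1 R, e r ^ 2 := by
      rw [hBdef]
      field_simp
    rw [hRB]
    linarith [hsum, hquad]
  obtain ⟨r, hrmem, hrle⟩ := Finset.exists_le_of_sum_le
    ⟨1, Finset.mem_Icc.mpr ⟨le_refl 1, hR⟩⟩ htotal
  exact ⟨r, (Finset.mem_Icc.mp hrmem).2, hrle⟩
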